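/- Let α > 2, θ ≥ 0, b ≥ 0, and let c, λ > 0 be constants. Then ∫₀^∞ 2λπ r e^(-λπr²) · e^(-cπr²) · exp(-2λπ ∫_r^∞ (1 - (1 + θ(r/y)^α)^(-b)) y dy) dr = 1 / (c/λ + ₂F₁(b, -2/α; 1 - 2/α; -θ)). -/

import Mathlib

open MeasureTheory Real Set Filter Topology

/-- The Gauss hypergeometric function `₂F₁(b, -2/α; 1-2/α; -θ)`, characterized (as in the paper)
via the integral identity `₂F₁(b,-2/α;1-2/α;-θ) = 1 + ∫₁^∞ (1 - (1+θh^(-α/2))^(-b)) dh`. -/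
noncomputable def hyp2F1 (b α θ : ℝ) : ℝ :=
  1 + ∫ h in Set.Ioi (1:ℝ), (1 - (1 + θ * h ^ (-(α/2))) ^ (-b))

section aux

lemma aux_nonneg {x b : ℝ} (hx : 0 ≤ x) (hb : 0 ≤ b) :
    0 ≤ 1 - (1 + x) ^ (-b) := by
  have h := Real.rpow_le_one_of_one_le_of_nonpos (by linarith : (1:ℝ) ≤ 1 + x)
    (by linarith : -b ≤ 0)
  linarith

lemma aux_le {x b : ℝ} (hx : 0 ≤ x) (hb : 0 ≤ b) :
    1 - (1 + x) ^ (-b) ≤ max b 1 * x := by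
  set C := max b 1 with hC
  have hC1 : (1:ℝ) ≤ C := le_max_right _ _
  have hCb : b ≤ C := le_max_left _ _
  have h1x : (0:ℝ) < 1 + x := by linarith
  have step1 : (1 + x) ^ (-C) ≤ (1 + x) ^ (-b) :=
    Real.rpow_le_rpow_of_exponent_le (by linarith) (by linarith)
  have key : 1 - (1 + x) ^ (-C) ≤ C * x := by
    set t := (1 + x)⁻¹ with ht
    have ht0 : 0 < t := inv_pos.mpr h1x
    have htx : t * (1 + x) = 1 := inv_mul_cancel₀ h1x.ne'
    have ht1 : t ≤ 1 := by nlinarith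
    have hbern : 1 + C * (t - 1) ≤ (1 + (t - 1)) ^ C :=
      one_add_mul_self_le_rpow_one_add (by linarith) hC1
    have hbern' : 1 + C * (t - 1) ≤ t ^ C := by
      rwa [show 1 + (t - 1) = t by ring] at hbern
    have heq : (1 + x) ^ (-C) = t ^ C := by
      rw [ht, Real.inv_rpow h1x.le]
      exact Real.rpow_neg h1x.le C
    have h1t : 1 - t ≤ x := by nlinarith
    have : 1 - t ^ C ≤ C * (1 - t) := by nlinarith
    calc 1 - (1 + x) ^ (-C) = 1 - t ^ C := by rw [heq]
      _ ≤ C * (1 - t) := this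
      _ ≤ C * x := by nlinarith
  linarith

variable {α θ b : ℝ}

lemma f_contOn (hθ : 0 ≤ θ) :
    ContinuousOn (fun h : ℝ => 1 - (1 + θ * h ^ (-(α/2))) ^ (-b)) (Ioi 1) := by
  apply continuousOn_const.sub
  apply ContinuousOn.rpow_const
  · exact continuousOn_const.add (continuousOn_const.mul
      (continuousOn_id.rpow_const fun h hh => Or.inl (ne_of_gt (lt_trans one_pos hh))))
  · intro h hh
    left
    have h0 : (0:ℝ) < h := lt_trans one_pos hh
    have : 0 ≤ θ * h ^ (-(α/2)) := mul_nonneg hθ (Real.rpow_nonneg h0.le _)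
    positivity

lemma f_integrableOn (hα : 2 < α) (hθ : 0 ≤ θ) (hb : 0 ≤ b) :
    IntegrableOn (fun h : ℝ => 1 - (1 + θ * h ^ (-(α/2))) ^ (-b)) (Ioi 1) := by
  have hmaj : IntegrableOn (fun h : ℝ => max b 1 * θ * h ^ (-(α/2))) (Ioi 1) := by
    have := (integrableOn_Ioi_rpow_of_lt (show -(α/2) < -1 by linarith) one_pos).const_mul
      (max b 1 * θ)
    simpa [mul_assoc, IntegrableOn] using this
  refine hmaj.mono' ((f_contOn hθ).aestronglyMeasurable measurableSet_Ioi) ?_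
  filter_upwards [ae_restrict_mem measurableSet_Ioi] with h hh
  have h0 : (0:ℝ) < h := lt_trans one_pos hh
  have hx : 0 ≤ θ * h ^ (-(α/2)) := mul_nonneg hθ (Real.rpow_nonneg h0.le _)
  rw [Real.norm_eq_abs, abs_of_nonneg (aux_nonneg hx hb)]
  calc 1 - (1 + θ * h ^ (-(α/2))) ^ (-b) ≤ max b 1 * (θ * h ^ (-(α/2))) := aux_le hx hb
    _ = max b 1 * θ * h ^ (-(α/2)) := by ring

lemma g_contOn (hθ : 0 ≤ θ) {r : ℝ} (hr : 0 < r) :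
    ContinuousOn (fun y : ℝ => (1 - (1 + θ * (r / y) ^ α) ^ (-b)) * y) (Ioi 0) := by
  refine ContinuousOn.mul (continuousOn_const.sub ?_) continuousOn_id
  apply ContinuousOn.rpow_const
  · refine continuousOn_const.add (continuousOn_const.mul (ContinuousOn.rpow_const ?_ ?_))
    · exact continuousOn_const.div continuousOn_id fun y hy => ne_of_gt hy
    · intro y hy
      exact Or.inl (ne_of_gt (div_pos hr hy))
  · intro y hy
    left
    have : 0 ≤ θ * (r / y) ^ α := mul_nonneg hθ (Real.rpow_nonneg (div_pos hr hy).le _)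
    positivity

lemma g_integrableOn (hα : 2 < α) (hθ : 0 ≤ θ) (hb : 0 ≤ b) {r : ℝ} (hr : 0 < r) :
    IntegrableOn (fun y : ℝ => (1 - (1 + θ * (r / y) ^ α) ^ (-b)) * y) (Ioi r) := by
  have hmaj : IntegrableOn (fun y : ℝ => max b 1 * θ * r ^ α * y ^ (1 - α)) (Ioi r) := by
    have := (integrableOn_Ioi_rpow_of_lt (show 1 - α < -1 by linarith) hr).const_mul
      (max b 1 * θ * r ^ α)
    simpa [mul_assoc, IntegrableOn] using this
  refine hmaj.mono' (((g_contOn hθ hr).mono fun y hy => lt_trans hr hy).aestronglyMeasurable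
    measurableSet_Ioi) ?_
  filter_upwards [ae_restrict_mem measurableSet_Ioi] with y hy
  have hy0 : (0:ℝ) < y := lt_trans hr hy
  have hx : 0 ≤ θ * (r / y) ^ α := mul_nonneg hθ (Real.rpow_nonneg (div_pos hr hy0).le _)
  have hnn : 0 ≤ (1 - (1 + θ * (r / y) ^ α) ^ (-b)) * y :=
    mul_nonneg (aux_nonneg hx hb) hy0.le
  rw [Real.norm_eq_abs, abs_of_nonneg hnn]
  have hb1 : (1 - (1 + θ * (r / y) ^ α) ^ (-b)) * y ≤ max b 1 * (θ * (r / y) ^ α) * y :=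
    mul_le_mul_of_nonneg_right (aux_le hx hb) hy0.le
  have hrw : (r / y) ^ α * y = r ^ α * y ^ (1 - α) := by
    rw [Real.div_rpow hr.le hy0.le, Real.rpow_sub hy0, Real.rpow_one]
    field_simp
  calc (1 - (1 + θ * (r / y) ^ α) ^ (-b)) * y ≤ max b 1 * (θ * (r / y) ^ α) * y := hb1
    _ = max b 1 * θ * ((r / y) ^ α * y) := by ring
    _ = max b 1 * θ * (r ^ α * y ^ (1 - α)) := by rw [hrw]
    _ = max b 1 * θ * r ^ α * y ^ (1 - α) := by ring

lemma sqrt_tendsto_atTop : Tendsto Real.sqrt atTop atTop := by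
  apply tendsto_atTop_atTop.mpr
  intro B
  refine ⟨(max B 0) ^ 2, fun x hx => ?_⟩
  have h1 : Real.sqrt ((max B 0) ^ 2) ≤ Real.sqrt x := Real.sqrt_le_sqrt hx
  rw [Real.sqrt_sq (le_max_right _ _)] at h1
  exact le_trans (le_max_left B 0) h1

lemma comp_eq (hθ : 0 ≤ θ) {r h : ℝ} (hr : 0 < r) (hh : 1 ≤ h) :
    (1 - (1 + θ * (r / (r * Real.sqrt h)) ^ α) ^ (-b)) * (r * Real.sqrt h)
        * (r / (2 * Real.sqrt h))
      = r ^ 2 / 2 * (1 - (1 + θ * h ^ (-(α/2))) ^ (-b)) := by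
  have hh0 : (0:ℝ) < h := lt_of_lt_of_le one_pos hh
  have hs0 : (0:ℝ) < Real.sqrt h := Real.sqrt_pos.mpr hh0
  have h1 : r / (r * Real.sqrt h) = h ^ (-(1/2) : ℝ) := by
    rw [Real.rpow_neg hh0.le, ← Real.sqrt_eq_rpow]
    field_simp
  have h2 : (h ^ (-(1/2) : ℝ)) ^ α = h ^ (-(α/2)) := by
    rw [← Real.rpow_mul hh0.le]
    congr 1
    ring
  rw [h1, h2]
  have h3 : r * Real.sqrt h * (r / (2 * Real.sqrt h)) = r ^ 2 / 2 := by
    field_simp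
  calc (1 - (1 + θ * h ^ (-(α/2))) ^ (-b)) * (r * Real.sqrt h) * (r / (2 * Real.sqrt h))
      = (1 - (1 + θ * h ^ (-(α/2))) ^ (-b)) * (r * Real.sqrt h * (r / (2 * Real.sqrt h))) := by
        ring
    _ = (1 - (1 + θ * h ^ (-(α/2))) ^ (-b)) * (r ^ 2 / 2) := by rw [h3]
    _ = r ^ 2 / 2 * (1 - (1 + θ * h ^ (-(α/2))) ^ (-b)) := by ring

lemma inner_eq (hα : 2 < α) (hθ : 0 ≤ θ) (hb : 0 ≤ b) {r : ℝ} (hr : 0 < r) :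
    (∫ y in Ioi r, (1 - (1 + θ * (r / y) ^ α) ^ (-b)) * y)
      = r ^ 2 / 2 * ∫ h in Ioi 1, (1 - (1 + θ * h ^ (-(α/2))) ^ (-b)) := by
  set g : ℝ → ℝ := fun y => (1 - (1 + θ * (r / y) ^ α) ^ (-b)) * y with hg
  set φ : ℝ → ℝ := fun h => r * Real.sqrt h with hφ
  set φ' : ℝ → ℝ := fun h => r / (2 * Real.sqrt h) with hφ'
  have himg1 : φ '' Ioi 1 ⊆ Ioi 0 := by
    rintro _ ⟨h, hh, rfl⟩
    exact mul_pos hr (Real.sqrt_pos.mpr (lt_trans one_pos hh))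
  have himg2 : φ '' Ici 1 ⊆ Ici r := by
    rintro _ ⟨h, hh, rfl⟩
    have : (1:ℝ) ≤ Real.sqrt h := by
      rw [show (1:ℝ) = Real.sqrt 1 by simp]
      exact Real.sqrt_le_sqrt hh
    simpa [hφ] using le_mul_of_one_le_right hr.le this
  have hcompeq : EqOn (fun x => (g ∘ φ) x * φ' x)
      (fun h => r ^ 2 / 2 * (1 - (1 + θ * h ^ (-(α/2))) ^ (-b))) (Ioi 1) := by
    intro h hh
    exact comp_eq hθ hr (le_of_lt hh)
  have hint2 : IntegrableOn (fun x => (g ∘ φ) x * φ' x) (Ici 1) := by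
    rw [integrableOn_Ici_iff_integrableOn_Ioi]
    exact IntegrableOn.congr_fun ((f_integrableOn hα hθ hb).const_mul (r^2/2)) hcompeq.symm
      measurableSet_Ioi
  have key := integral_comp_mul_deriv_Ioi (f := φ) (f' := φ') (g := g) (a := 1)
    ((continuous_const.mul Real.continuous_sqrt).continuousOn)
    (sqrt_tendsto_atTop.const_mul_atTop hr)
    (fun x hx => by
      have hx0 : (0:ℝ) < x := lt_trans one_pos hx
      have h := ((Real.hasDerivAt_sqrt (ne_of_gt hx0)).const_mul r).hasDerivWithinAt (s := Ioi x)
      refine h.congr_deriv ?_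
      rw [hφ']
      ring)
    ((g_contOn hθ hr).mono himg1)
    (((integrableOn_Ici_iff_integrableOn_Ioi (f := g) (b := r)).mpr (g_integrableOn hα hθ hb hr)).mono_set himg2)
    hint2
  have hφ1 : φ 1 = r := by simp [φ]
  rw [hφ1] at key
  rw [← key, setIntegral_congr_fun measurableSet_Ioi hcompeq, MeasureTheory.integral_const_mul]

lemma half_gauss {K : ℝ} (hK : 0 < K) :
    ∫ r in Ioi (0:ℝ), r * Real.exp (-(K * r ^ 2)) = (2 * K)⁻¹ := by
  have A : ∀ x ∈ Ici (0:ℝ), HasDerivAt (fun y : ℝ => -(2 * K)⁻¹ * Real.exp (-(K * y ^ 2)))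
      (x * Real.exp (-(K * x ^ 2))) x := by
    intro x _
    have h1 : HasDerivAt (fun y : ℝ => -(K * y ^ 2)) (-(K * (2 * x))) x := by
      have := ((hasDerivAt_pow 2 x).const_mul K).neg
      exact this.congr_deriv (by simp [mul_comm])
    have h2 := (h1.exp).const_mul (-(2 * K)⁻¹)
    refine h2.congr_deriv ?_
    field_simp
  have C : IntegrableOn (fun x : ℝ => x * Real.exp (-(K * x ^ 2))) (Ioi 0) := by
    have := (integrable_mul_exp_neg_mul_sq hK).integrableOn (s := Ioi (0:ℝ))
    simpa [neg_mul] using this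
  have B : Tendsto (fun y : ℝ => -(2 * K)⁻¹ * Real.exp (-(K * y ^ 2))) atTop
      (𝓝 (-(2 * K)⁻¹ * 0)) := by
    refine Tendsto.const_mul _ (Real.tendsto_exp_atBot.comp ?_)
    have h3 : Tendsto (fun y : ℝ => -K * y ^ 2) atTop atBot :=
      (tendsto_pow_atTop two_ne_zero).const_mul_atTop_of_neg (neg_lt_zero.2 hK)
    simpa [neg_mul] using h3
  rw [mul_zero] at B
  have := integral_Ioi_of_hasDerivAt_of_tendsto' A C B
  simpa using this

end aux

theorem stmt_2 (α θ b lam c : ℝ) (hα : 2 < α) (hθ : 0 ≤ θ) (hb : 0 ≤ b)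
    (hlam : 0 < lam) (hc : 0 < c) :
    (∫ r in Set.Ioi (0:ℝ),
        2 * lam * π * r * Real.exp (-(lam * π * r ^ 2)) * Real.exp (-(c * π * r ^ 2)) *
          Real.exp (-(2 * lam * π *
            ∫ y in Set.Ioi r, (1 - (1 + θ * (r / y) ^ α) ^ (-b)) * y)))
      = 1 / (c / lam + hyp2F1 b α θ) := by
  set I : ℝ := ∫ h in Ioi (1:ℝ), (1 - (1 + θ * h ^ (-(α/2))) ^ (-b)) with hI
  have hI0 : 0 ≤ I := by
    refine setIntegral_nonneg measurableSet_Ioi fun h hh => ?_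
    have h0 : (0:ℝ) < h := lt_trans one_pos hh
    exact aux_nonneg (mul_nonneg hθ (Real.rpow_nonneg h0.le _)) hb
  set K : ℝ := (lam + c + lam * I) * π with hK
  have hKpos : 0 < K := by
    have h1 : 0 < lam + c + lam * I := by nlinarith
    exact mul_pos h1 pi_pos
  have hcongr : EqOn
      (fun r : ℝ => 2 * lam * π * r * Real.exp (-(lam * π * r ^ 2)) *
        Real.exp (-(c * π * r ^ 2)) * Real.exp (-(2 * lam * π *
          ∫ y in Set.Ioi r, (1 - (1 + θ * (r / y) ^ α) ^ (-b)) * y)))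
      (fun r : ℝ => (2 * lam * π) * (r * Real.exp (-(K * r ^ 2)))) (Ioi 0) := by
    intro r hr
    simp only
    rw [inner_eq hα hθ hb hr, ← hI]
    rw [mul_assoc, mul_assoc, ← Real.exp_add, ← Real.exp_add]
    rw [show -(lam * π * r ^ 2) + (-(c * π * r ^ 2) + -(2 * lam * π * (r ^ 2 / 2 * I)))
        = -(K * r ^ 2) by rw [hK]; ring]
    ring
  rw [setIntegral_congr_fun measurableSet_Ioi hcongr, MeasureTheory.integral_const_mul, half_gauss hKpos]
  have hden : 0 < c / lam + hyp2F1 b α θ := by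
    rw [hyp2F1, ← hI]
    have := div_pos hc hlam
    linarith
  rw [hyp2F1, ← hI]
  rw [hK]
  field_simp
  ring
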